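/- Crossing inequality for finitely many gates: given finitely many gates (vertical segments [mᵢ, Mᵢ] at positions xᵢ) and slopes α < β, let t(x,y) be the minimal number of gates crossed by any trajectory starting at (x,y) with slopes confined to [α, β], and T(x) = sup_y t(x,y). Then ∫_ℝ T(x) dx ≤ (1/(β-α)) · Σᵢ (Mᵢ - mᵢ). -/

import Mathlib

open Set MeasureTheory
open scoped ENNReal

/-- A trajectory from `(x, y)` with all slopes in `[α, β]`. -/
def IsTraj (α β x y : ℝ) (f : ℝ → ℝ) : Prop :=
  f x = y ∧ ∀ t s : ℝ, x ≤ t → t ≤ s →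
    α * (s - t) ≤ f s - f t ∧ f s - f t ≤ β * (s - t)

/-- `crossT α β xs ms Ms x y`: minimal number of gates (vertical segments `{xs i} × [ms i, Ms i]`)
crossed by a trajectory starting at `(x, y)` with slopes in `[α, β]`. -/
noncomputable def crossT (α β : ℝ) {n : ℕ} (xs ms Ms : Fin n → ℝ) (x y : ℝ) : ℝ≥0∞ :=
  ⨅ (f : ℝ → ℝ) (_ : IsTraj α β x y f),
    (({i : Fin n | x ≤ xs i ∧ f (xs i) ∈ Icc (ms i) (Ms i)}.ncard : ℝ≥0∞))

namespace CrossingPf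


lemma isTraj_linear (α β x y γ : ℝ) (h1 : α ≤ γ) (h2 : γ ≤ β) :
    IsTraj α β x y (fun u => y + γ * (u - x)) := by
  constructor
  · simp
  · intro t s _ hts
    have h0 : (0:ℝ) ≤ s - t := by linarith
    have e : (y + γ * (s - x)) - (y + γ * (t - x)) = γ * (s - t) := by ring
    simp only [e]
    exact ⟨mul_le_mul_of_nonneg_right h1 h0, mul_le_mul_of_nonneg_right h2 h0⟩

lemma isTraj_glue {α β x y x' y' : ℝ} {f₁ f₂ : ℝ → ℝ} (hx : x ≤ x')
    (h₁ : IsTraj α β x y f₁) (h₂ : IsTraj α β x' y' f₂) (hm : f₁ x' = y') (hxx : x < x') :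
    IsTraj α β x y (fun u => if u < x' then f₁ u else f₂ u) := by
  obtain ⟨h₁0, h₁s⟩ := h₁
  obtain ⟨h₂0, h₂s⟩ := h₂
  constructor
  · simp only [if_pos hxx]; exact h₁0
  · intro t s hxt hts
    by_cases ht : t < x'
    · by_cases hs : s < x'
      · simp only [if_pos ht, if_pos hs]
        exact h₁s t s hxt hts
      · push_neg at hs
        simp only [if_pos ht, if_neg (not_lt.mpr hs)]
        have e1 := h₁s t x' hxt (le_of_lt ht)
        have e2 := h₂s x' s (le_refl _) hs
        have : f₂ s - f₁ t = (f₂ s - f₂ x') + (f₁ x' - f₁ t) := by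
          rw [h₂0, hm]; ring
        constructor <;> nlinarith [this]
    · push_neg at ht
      have hs : ¬ s < x' := not_lt.mpr (le_trans ht hts)
      simp only [if_neg (not_lt.mpr ht), if_neg hs]
      exact h₂s t s ht hts

lemma crossT_le {α β : ℝ} {n : ℕ} {xs ms Ms : Fin n → ℝ} {x y : ℝ} {f : ℝ → ℝ}
    (hf : IsTraj α β x y f) :
    crossT α β xs ms Ms x y ≤
      (({i : Fin n | x ≤ xs i ∧ f (xs i) ∈ Icc (ms i) (Ms i)}.ncard : ℝ≥0∞)) := by
  exact iInf_le_of_le f (iInf_le_of_le hf le_rfl)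



/-- erosion: min of `h` over the window `[v, v+c]`. -/
noncomputable def eros (c : ℝ) (h : ℝ → ℕ) (v : ℝ) : ℕ := sInf (h '' Icc v (v + c))

noncomputable def lam (h : ℝ → ℕ) (w : ℝ) : ℝ≥0∞ := ⨆ v : ℝ, ((eros w h v : ℕ) : ℝ≥0∞)

noncomputable def Phi (h : ℝ → ℕ) : ℝ≥0∞ := ∫⁻ v : ℝ, ((h v : ℕ) : ℝ≥0∞)

def Nice (h : ℝ → ℕ) : Prop :=
  (∀ k : ℕ, IsClosed {v : ℝ | k ≤ h v}) ∧ ∃ A B : ℝ, {v : ℝ | 1 ≤ h v} ⊆ Icc A B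

lemma eros_le {c : ℝ} {h : ℝ → ℕ} {v u : ℝ} (hu : u ∈ Icc v (v + c)) :
    eros c h v ≤ h u := Nat.sInf_le ⟨u, hu, rfl⟩

lemma eros_exists {c : ℝ} (h : ℝ → ℕ) {v : ℝ} (hc : 0 ≤ c) :
    ∃ u ∈ Icc v (v + c), h u = eros c h v := by
  have hne : (h '' Icc v (v + c)).Nonempty :=
    ⟨h v, ⟨v, ⟨le_refl v, by linarith⟩, rfl⟩⟩
  obtain ⟨u, hu, hequ⟩ := Nat.sInf_mem hne
  exact ⟨u, hu, hequ⟩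

lemma le_eros_iff {c : ℝ} {h : ℝ → ℕ} {v : ℝ} {k : ℕ} (hc : 0 ≤ c) :
    k ≤ eros c h v ↔ ∀ u ∈ Icc v (v + c), k ≤ h u := by
  constructor
  · intro hk u hu
    exact le_trans hk (eros_le hu)
  · intro hall
    obtain ⟨u, hu, hequ⟩ := eros_exists h hc
    rw [← hequ]; exact hall u hu

lemma eros_level {c : ℝ} {h : ℝ → ℕ} {k : ℕ} (hc : 0 ≤ c) :
    {v : ℝ | k ≤ eros c h v} = {v : ℝ | Icc v (v + c) ⊆ {u : ℝ | k ≤ h u}} := by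
  ext v
  simp only [mem_setOf_eq]
  rw [le_eros_iff hc]
  rfl

lemma eros_anti {h : ℝ → ℕ} {w w' v : ℝ} (hw0 : 0 ≤ w) (hw : w ≤ w') :
    eros w' h v ≤ eros w h v := by
  obtain ⟨u, hu, hequ⟩ := eros_exists h hw0
  rw [← hequ]
  exact eros_le ⟨hu.1, by linarith [hu.2]⟩

lemma eros_neg {h : ℝ → ℕ} {w v : ℝ} (hw : w < 0) : eros w h v = 0 := by
  have : Icc v (v + w) = ∅ := Icc_eq_empty (by linarith)
  simp [eros, this, Nat.sInf_empty]

lemma nice_zero : Nice (fun _ => 0) := by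
  constructor
  · intro k
    rcases Nat.eq_zero_or_pos k with hk|hk
    · subst hk; simp only [Nat.le_zero]; simpa using isClosed_univ
    · convert isClosed_empty
      ext v; simp; omega
  · exact ⟨0, 0, by intro v hv; simp at hv⟩

lemma nice_ind (a b : ℝ) : Nice (fun v => if v ∈ Icc a b then 1 else 0) := by
  constructor
  · intro k
    match k with
    | 0 => simpa using isClosed_univ
    | 1 =>
      convert isClosed_Icc (a := a) (b := b)
      ext v
      by_cases hv : v ∈ Icc a b
      · simp only [mem_setOf_eq, if_pos hv]
        exact iff_of_true le_rfl hv
      · simp only [mem_setOf_eq, if_neg hv]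
        constructor
        · intro h; omega
        · intro h; exact absurd h hv
    | (k+2) =>
      convert isClosed_empty
      ext v
      simp only [mem_setOf_eq, mem_empty_iff_false, iff_false]
      by_cases hv : v ∈ Icc a b <;> simp [if_pos, if_neg, hv]
  · refine ⟨a, b, ?_⟩
    intro v hv
    simp only [mem_setOf_eq] at hv
    by_cases h : v ∈ Icc a b
    · exact h
    · simp [h] at hv

lemma nice_add {f g : ℝ → ℕ} (hf : Nice f) (hg : Nice g) : Nice (fun v => f v + g v) := by
  constructor
  · intro k
    have : {v : ℝ | k ≤ f v + g v} =
        ⋃ a ∈ Finset.range (k+1), ({v : ℝ | a ≤ f v} ∩ {v : ℝ | k - a ≤ g v}) := by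
      ext v
      simp only [mem_setOf_eq, Finset.mem_range, mem_iUnion, mem_inter_iff, exists_prop]
      constructor
      · intro h
        exact ⟨min (f v) k, by omega, by omega, by omega⟩
      · rintro ⟨a, ha, h1, h2⟩; omega
    rw [this]
    refine Set.Finite.isClosed_biUnion (Finset.finite_toSet _) (fun a _ => ?_)
    exact (hf.1 a).inter (hg.1 (k - a))
  · obtain ⟨A, B, hAB⟩ := hf.2
    obtain ⟨A', B', hAB'⟩ := hg.2
    refine ⟨min A A', max B B', ?_⟩
    intro v hv
    simp only [mem_setOf_eq] at hv
    have : 1 ≤ f v ∨ 1 ≤ g v := by omega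
    rcases this with h|h
    · have := hAB h
      exact ⟨le_trans (min_le_left _ _) this.1, le_trans this.2 (le_max_left _ _)⟩
    · have := hAB' h
      exact ⟨le_trans (min_le_right _ _) this.1, le_trans this.2 (le_max_right _ _)⟩

lemma erosSet_eq {S : Set ℝ} {c : ℝ} (hc : 0 ≤ c) :
    {z : ℝ | Icc z (z + c) ⊆ S} = ⋂ u ∈ Icc (0:ℝ) c, (fun z => z + u) ⁻¹' S := by
  ext z
  simp only [mem_setOf_eq, mem_iInter, mem_preimage]
  constructor
  · intro h u hu
    exact h ⟨by linarith [hu.1], by linarith [hu.2]⟩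
  · intro h w hw
    have := h (w - z) ⟨by linarith [hw.1], by linarith [hw.2]⟩
    simpa using this

lemma erosSet_closed {S : Set ℝ} {c : ℝ} (hc : 0 ≤ c) (hS : IsClosed S) :
    IsClosed {z : ℝ | Icc z (z + c) ⊆ S} := by
  rw [erosSet_eq hc]
  exact isClosed_biInter (fun u _ => hS.preimage (by fun_prop))

lemma nice_eros_shift {g : ℝ → ℕ} (hg : Nice g) {c s : ℝ} (hc : 0 ≤ c) :
    Nice (fun v => eros c g (v + s)) := by
  constructor
  · intro k
    have : {v : ℝ | k ≤ eros c g (v + s)} =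
        (fun v => v + s) ⁻¹' {z : ℝ | Icc z (z + c) ⊆ {u : ℝ | k ≤ g u}} := by
      ext v
      simp only [mem_setOf_eq, mem_preimage]
      rw [le_eros_iff hc]; rfl
    rw [this]
    exact (erosSet_closed hc (hg.1 k)).preimage (by fun_prop)
  · obtain ⟨A, B, hAB⟩ := hg.2
    refine ⟨A - s, B - s, ?_⟩
    intro v hv
    simp only [mem_setOf_eq] at hv
    have h1 : 1 ≤ g (v + s) := by
      have : eros c g (v + s) ≤ g (v + s) := Nat.sInf_le ⟨v + s, ⟨le_refl _, by linarith⟩, rfl⟩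
      omega
    have := hAB h1
    exact ⟨by linarith [this.1], by linarith [this.2]⟩

lemma nice_measurable {h : ℝ → ℕ} (hh : Nice h) : Measurable h := by
  apply measurable_to_countable'
  intro m
  have : h ⁻¹' {m} = {v : ℝ | m ≤ h v} \ {v : ℝ | m + 1 ≤ h v} := by
    ext v; simp only [mem_preimage, mem_singleton_iff, mem_diff, mem_setOf_eq]; omega
  rw [this]
  exact ((hh.1 m).measurableSet).diff ((hh.1 (m+1)).measurableSet)


/-- ℕ tsum identity. -/
lemma nat_tsum_levels (m : ℕ) :
    ((m : ℝ≥0∞)) = ∑' k : ℕ, (if k + 1 ≤ m then (1:ℝ≥0∞) else 0) := by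
  rw [tsum_eq_sum (s := Finset.range m)
    (by intro k hk; simp only [Finset.mem_range, not_lt] at hk; rw [if_neg (by omega)])]
  rw [Finset.sum_congr rfl (g := fun _ => (1:ℝ≥0∞))
    (fun k hk => by simp only [Finset.mem_range] at hk; rw [if_pos (by omega)])]
  simp

/-- generic level-decomposition for lintegral of functions that are pointwise a
tsum of indicators. -/
lemma lintegral_levels {μ : Measure ℝ} (g : ℝ → ℝ≥0∞) (L : ℕ → Set ℝ)
    (hmeas : ∀ k, MeasurableSet (L k))
    (hpt : ∀ x, g x = ∑' k : ℕ, Set.indicator (L k) (fun _ => (1:ℝ≥0∞)) x) :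
    ∫⁻ x, g x ∂μ = ∑' k : ℕ, μ (L k) := by
  calc ∫⁻ x, g x ∂μ = ∫⁻ x, ∑' k : ℕ, Set.indicator (L k) (fun _ => (1:ℝ≥0∞)) x ∂μ := by
        exact lintegral_congr hpt
    _ = ∑' k : ℕ, ∫⁻ x, Set.indicator (L k) (fun _ => (1:ℝ≥0∞)) x ∂μ :=
        lintegral_tsum (fun k => ((measurable_one).indicator (hmeas k)).aemeasurable)
    _ = ∑' k : ℕ, μ (L k) := by
        refine tsum_congr (fun k => ?_)
        rw [lintegral_indicator (hmeas k)]
        simp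


/-- One-level set lemma: erosion loses at least `min c ℓ` of measure, where `ℓ` is the
length of an interval inside `S`. -/
lemma set_lemma {S : Set ℝ} (hScl : IsClosed S) {A B : ℝ} (hSb : S ⊆ Icc A B)
    {c ℓ v : ℝ} (hc : 0 < c) (hℓ : 0 ≤ ℓ) (hI : Icc v (v + ℓ) ⊆ S) :
    volume {z : ℝ | Icc z (z + c) ⊆ S} + ENNReal.ofReal (min c ℓ) ≤ volume S := by
  set E : Set ℝ := {z : ℝ | Icc z (z + c) ⊆ S} with hE
  have hEmeas : MeasurableSet E := by
    have : E = ⋂ u ∈ Icc (0:ℝ) c, (fun z => z + u) ⁻¹' S := by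
      ext z
      simp only [hE, mem_setOf_eq, mem_iInter, mem_preimage]
      constructor
      · intro h u hu; exact h ⟨by linarith [hu.1], by linarith [hu.2]⟩
      · intro h w hw
        have := h (w - z) ⟨by linarith [hw.1], by linarith [hw.2]⟩
        simpa using this
    rw [this]
    exact (isClosed_biInter (fun u _ => hScl.preimage (by fun_prop))).measurableSet
  have hSmeas : MeasurableSet S := hScl.measurableSet
  have hES : E ⊆ S := fun z hz => hz ⟨le_refl _, by linarith⟩
  set m : ℝ := min c ℓ with hm
  have hm0 : 0 ≤ m := le_min hc.le hℓ
  have hmc : m ≤ c := min_le_left _ _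
  have hmℓ : m ≤ ℓ := min_le_right _ _
  set J : Set ℝ := Ioo (v + ℓ - m) (v + ℓ) with hJ
  have hJS : J ⊆ S := fun z hz => hI ⟨by simp only [hJ, mem_Ioo] at hz; linarith [hz.1],
    by simp only [hJ, mem_Ioo] at hz; linarith [hz.2]⟩
  -- the orbit sets
  set Aj : ℕ → Set ℝ := fun j =>
    {z ∈ J | (∀ i ≤ j, z + i * c ∈ S) ∧ z + (j + 1 : ℕ) * c ∉ S} with hAj
  have hAjmeas : ∀ j, MeasurableSet (Aj j) := by
    intro j
    have : Aj j = (J ∩ ⋂ i ∈ Finset.range (j+1), (fun z => z + (i:ℝ) * c) ⁻¹' S) ∩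
        (fun z => z + ((j:ℝ) + 1) * c) ⁻¹' Sᶜ := by
      ext z
      simp only [hAj, mem_setOf_eq, mem_inter_iff, mem_iInter, mem_preimage, mem_compl_iff,
        Finset.mem_range]
      constructor
      · rintro ⟨h1, h2, h3⟩
        refine ⟨⟨h1, fun i hi => h2 i (by omega)⟩, by push_cast at h3 ⊢; convert h3 using 2⟩
      · rintro ⟨⟨h1, h2⟩, h3⟩
        refine ⟨h1, fun i hi => h2 i (by omega), by push_cast at h3 ⊢; convert h3 using 2⟩
    rw [this]
    refine (measurableSet_Ioo.inter ?_).inter (hSmeas.compl.preimage (by fun_prop))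
    exact MeasurableSet.biInter (Finset.range (j+1)).countable_toSet
      (fun i _ => hSmeas.preimage (by fun_prop))
  -- J is covered by the Aj
  have hcover : J ⊆ ⋃ j, Aj j := by
    intro z hz
    have hzS : z ∈ S := hJS hz
    have hex : ∃ j : ℕ, z + j * c ∉ S := by
      obtain ⟨N, hN⟩ := exists_nat_gt ((B - z) / c)
      refine ⟨N, fun hmem => ?_⟩
      have := (hSb hmem).2
      have : (N:ℝ) * c > B - z := by
        rwa [div_lt_iff₀ hc] at hN
      linarith
    classical
    set j0 := Nat.find hex with hj0
    have hj0spec : z + j0 * c ∉ S := Nat.find_spec hex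
    have hj0pos : j0 ≠ 0 := by
      intro h
      rw [h] at hj0spec
      simp at hj0spec
      exact hj0spec hzS
    refine mem_iUnion.mpr ⟨j0 - 1, hz, fun i hi => ?_, ?_⟩
    · by_contra hmem
      have : j0 ≤ i := Nat.find_le hmem
      omega
    · have : (j0 - 1 + 1 : ℕ) = j0 := by omega
      rw [this]
      exact hj0spec
  -- translated copies
  set Bj : ℕ → Set ℝ := fun j => (fun z => z + (-(j * c))) ⁻¹' Aj j with hBj
  have hBjvol : ∀ j, volume (Bj j) = volume (Aj j) := fun j =>
    measure_preimage_add_right volume _ _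
  have hBjmeas : ∀ j, MeasurableSet (Bj j) := fun j => (hAjmeas j).preimage (by fun_prop)
  have hBjsub : ∀ j, Bj j ⊆ S \ E := by
    intro j y hy
    simp only [hBj, mem_preimage] at hy
    obtain ⟨hyJ, hyall, hynot⟩ := hy
    constructor
    · have h0 := hyall j (le_refl j)
      have heq : y + -((j:ℝ) * c) + (j:ℝ) * c = y := by ring
      rwa [heq] at h0
    · intro hyE
      apply hynot
      have h1 : y + c ∈ S := hyE ⟨by linarith, le_refl _⟩
      have heq : y + -((j:ℝ) * c) + ((j+1 : ℕ) : ℝ) * c = y + c := by push_cast; ring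
      rw [heq]
      exact h1
  have hBjdisj : Pairwise (Function.onFun Disjoint Bj) := by
    have key : ∀ j j' : ℕ, j < j' → ∀ y, y ∈ Bj j → y ∈ Bj j' → False := by
      intro j j' hjj' y hy hy'
      simp only [hBj, mem_preimage] at hy hy'
      have hz : y + (-(j * c)) ∈ J := hy.1
      have hz' : y + (-(j' * c)) ∈ J := hy'.1
      simp only [hJ, mem_Ioo] at hz hz'
      have h1 : (j:ℝ) * c + c ≤ (j':ℝ) * c := by
        have : (j:ℝ) + 1 ≤ j' := by exact_mod_cast hjj'
        nlinarith
      linarith [hz.1, hz.2, hz'.1, hz'.2, hmc]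
    intro j j' hne
    rcases lt_or_gt_of_ne hne with h|h
    · exact Set.disjoint_left.mpr (fun y hy hy' => key j j' h y hy hy')
    · exact Set.disjoint_left.mpr (fun y hy hy' => key j' j h y hy' hy)
  -- measure chain
  have hJm : volume J = ENNReal.ofReal m := by
    rw [hJ, Real.volume_Ioo]
    congr 1
    ring
  have chain : ENNReal.ofReal m ≤ volume (S \ E) := by
    calc ENNReal.ofReal m = volume J := hJm.symm
      _ ≤ volume (⋃ j, Aj j) := measure_mono hcover
      _ ≤ ∑' j, volume (Aj j) := measure_iUnion_le _
      _ = ∑' j, volume (Bj j) := by rw [tsum_congr (fun j => (hBjvol j).symm)]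
      _ = volume (⋃ j, Bj j) := (measure_iUnion hBjdisj hBjmeas).symm
      _ ≤ volume (S \ E) := measure_mono (iUnion_subset hBjsub)
  calc volume E + ENNReal.ofReal m ≤ volume E + volume (S \ E) := by
        exact add_le_add_right chain _
    _ = volume (E ∪ (S \ E)) := (measure_union' disjoint_sdiff_right hEmeas).symm
    _ = volume S := by rw [union_diff_cancel hES]

/-- the level sets (in `w`) of `lam`. -/
def lamLevel (h : ℝ → ℕ) (k : ℕ) : Set ℝ := {w : ℝ | ∃ v : ℝ, k + 1 ≤ eros w h v}

lemma le_lam_iff {h : ℝ → ℕ} {w : ℝ} {k : ℕ} :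
    ((k:ℝ≥0∞) + 1 ≤ lam h w) ↔ w ∈ lamLevel h k := by
  constructor
  · intro hk
    by_contra hniv
    simp only [lamLevel, mem_setOf_eq, not_exists, not_le] at hniv
    have : lam h w ≤ (k : ℝ≥0∞) := by
      refine iSup_le (fun v => ?_)
      have : eros w h v ≤ k := by have := hniv v; omega
      exact_mod_cast Nat.cast_le.mpr this
    have hlt : (k : ℝ≥0∞) < (k:ℝ≥0∞) + 1 := by
      refine ENNReal.lt_add_right ?_ one_ne_zero
      exact ENNReal.natCast_ne_top k
    exact absurd (le_trans hk this) (not_le.mpr hlt)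
  · rintro ⟨v, hv⟩
    calc ((k:ℝ≥0∞) + 1) ≤ ((eros w h v : ℕ) : ℝ≥0∞) := by exact_mod_cast hv
      _ ≤ lam h w := le_iSup (fun v => ((eros w h v : ℕ) : ℝ≥0∞)) v

lemma lamLevel_anti {h : ℝ → ℕ} {k : ℕ} : lamLevel h (k+1) ⊆ lamLevel h k := by
  rintro w ⟨v, hv⟩; exact ⟨v, by omega⟩

lemma lamLevel_ordConnected {h : ℝ → ℕ} {k : ℕ} : (lamLevel h k).OrdConnected := by
  constructor
  rintro a ⟨va, hva⟩ b ⟨vb, hvb⟩ w hw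
  refine ⟨vb, ?_⟩
  have ha0 : 0 ≤ a := by
    by_contra h0
    rw [eros_neg (by linarith)] at hva
    omega
  have hw0 : 0 ≤ w := le_trans ha0 hw.1
  obtain ⟨u, hu, hequ⟩ := eros_exists h (v := vb) hw0
  rw [← hequ]
  exact le_trans hvb (eros_le ⟨hu.1, by linarith [hu.2, hw.2]⟩)

lemma lamLevel_measurable {h : ℝ → ℕ} {k : ℕ} : MeasurableSet (lamLevel h k) :=
  (lamLevel_ordConnected).measurableSet

lemma lam_tsum (h : ℝ → ℕ) (w : ℝ) :
    lam h w = ∑' k : ℕ, Set.indicator (lamLevel h k) (fun _ => (1:ℝ≥0∞)) w := by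
  apply le_antisymm
  · refine iSup_le (fun v => ?_)
    rw [nat_tsum_levels (eros w h v)]
    refine Summable.tsum_le_tsum (fun k => ?_) ENNReal.summable ENNReal.summable
    by_cases hk : k + 1 ≤ eros w h v
    · rw [if_pos hk, Set.indicator_of_mem (show w ∈ lamLevel h k from ⟨v, hk⟩)]
    · rw [if_neg hk]; exact zero_le
  · by_cases hall : ∀ k : ℕ, w ∈ lamLevel h k
    · -- lam = ⊤
      have : lam h w = ⊤ := by
        rw [eq_top_iff]
        have : ∀ k : ℕ, (k : ℝ≥0∞) ≤ lam h w := by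
          intro k
          have := le_lam_iff.mpr (hall k)
          calc (k:ℝ≥0∞) ≤ (k:ℝ≥0∞) + 1 := le_self_add
            _ ≤ lam h w := this
        calc (⊤:ℝ≥0∞) = ⨆ k : ℕ, (k:ℝ≥0∞) := (ENNReal.iSup_natCast).symm
          _ ≤ lam h w := iSup_le this
      rw [this]; exact le_top
    · push_neg at hall
      classical
      set k0 := Nat.find hall with hk0
      have hk0spec : w ∉ lamLevel h k0 := Nat.find_spec hall
      have hmem : ∀ k, w ∈ lamLevel h k ↔ k < k0 := by
        intro k
        constructor
        · intro hk
          by_contra hge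
          push_neg at hge
          -- k0 ≤ k : then w ∈ lamLevel k ⊆ lamLevel k0 by antitone
          have : w ∈ lamLevel h k0 := by
            obtain ⟨v, hv⟩ := hk
            exact ⟨v, by omega⟩
          exact hk0spec this
        · intro hk
          by_contra hniv
          have : k0 ≤ k := Nat.find_le hniv
          omega
      rw [tsum_eq_sum (s := Finset.range k0)
        (by intro k hk; simp only [Finset.mem_range, not_lt] at hk
            rw [Set.indicator_of_notMem (by rw [hmem]; omega)])]
      calc ∑ k ∈ Finset.range k0, Set.indicator (lamLevel h k) (fun _ => (1:ℝ≥0∞)) w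
          ≤ ∑ k ∈ Finset.range k0, 1 := by
            refine Finset.sum_le_sum (fun k _ => ?_)
            classical
            rw [Set.indicator_apply]
            split <;> simp
        _ = (k0 : ℝ≥0∞) := by simp
        _ ≤ lam h w := by
            rcases Nat.eq_zero_or_pos k0 with h0|h0
            · rw [h0]; simp
            · have : w ∈ lamLevel h (k0 - 1) := by rw [hmem]; omega
              have := le_lam_iff.mpr this
              have h2 : k0 - 1 + 1 = k0 := by omega
              have heq : ((k0 - 1 : ℕ) : ℝ≥0∞) + 1 = (k0 : ℝ≥0∞) := by
                rw [← h2]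
                push_cast
                ring
              rwa [heq] at this

lemma lam_measurable (h : ℝ → ℕ) : Measurable (lam h) := by
  have : lam h = fun w => ∑' k : ℕ, Set.indicator (lamLevel h k) (fun _ => (1:ℝ≥0∞)) w := by
    ext w; exact lam_tsum h w
  rw [this]
  exact Measurable.ennreal_tsum (fun k => measurable_one.indicator lamLevel_measurable)


lemma coe_nat_comp_measurable {g : ℝ → ℕ} (hg : Measurable g) :
    Measurable (fun v => ((g v : ℕ) : ℝ≥0∞)) :=
  (measurable_from_nat (f := fun n : ℕ => (n : ℝ≥0∞))).comp hg

lemma Phi_shift {g : ℝ → ℕ} (hg : Measurable g) (s : ℝ) :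
    Phi (fun v => g (v + s)) = Phi g := by
  unfold Phi
  exact (measurePreserving_add_right volume s).lintegral_comp (coe_nat_comp_measurable hg)

lemma Phi_levels {h : ℝ → ℕ} (hh : Nice h) :
    Phi h = ∑' k : ℕ, volume {v : ℝ | k + 1 ≤ h v} := by
  unfold Phi
  exact lintegral_levels _ _ (fun k => (hh.1 (k+1)).measurableSet)
    (fun v => by
      rw [nat_tsum_levels (h v)]
      refine tsum_congr (fun k => ?_)
      by_cases hk : k + 1 ≤ h v
      · rw [if_pos hk, Set.indicator_of_mem (show v ∈ {v : ℝ | k + 1 ≤ h v} from hk)]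
      · rw [if_neg hk, Set.indicator_of_notMem (show v ∉ {v : ℝ | k + 1 ≤ h v} from hk)])

lemma setLintegral_lam_levels (h : ℝ → ℕ) {T : Set ℝ} (hT : MeasurableSet T) :
    ∫⁻ w in T, lam h w = ∑' k : ℕ, volume (lamLevel h k ∩ T) := by
  rw [lintegral_levels (μ := volume.restrict T) _ (lamLevel h)
    (fun k => lamLevel_measurable) (fun w => lam_tsum h w)]
  refine tsum_congr (fun k => ?_)
  rw [Measure.restrict_apply lamLevel_measurable]

lemma perLevel {S : Set ℝ} (hScl : IsClosed S) {A B : ℝ} (hSb : S ⊆ Icc A B)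
    {a : ℝ} (ha : 0 ≤ a) :
    volume {z : ℝ | Icc z (z + a) ⊆ S} +
      volume {w : ℝ | w ∈ Ioo 0 a ∧ ∃ v : ℝ, Icc v (v + w) ⊆ S} ≤ volume S := by
  set E : Set ℝ := {z : ℝ | Icc z (z + a) ⊆ S} with hE
  set F : Set ℝ := {w : ℝ | w ∈ Ioo 0 a ∧ ∃ v : ℝ, Icc v (v + w) ⊆ S} with hF
  have hES : E ⊆ S := fun z hz => hz ⟨le_refl _, by linarith⟩
  rcases eq_or_lt_of_le ha with ha0|ha0
  · have : F = ∅ := by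
      ext w; simp only [hF, mem_setOf_eq, mem_Ioo, mem_empty_iff_false, iff_false, not_and]
      rintro ⟨h1, h2⟩; linarith
    rw [this]
    simp only [measure_empty, add_zero]
    exact measure_mono hES
  · rcases eq_empty_or_nonempty F with hFe|hFne
    · rw [hFe]
      simp only [measure_empty, add_zero]
      exact measure_mono hES
    · have hSfin : volume S < ⊤ :=
        lt_of_le_of_lt (measure_mono hSb) (by rw [Real.volume_Icc]; exact ENNReal.ofReal_lt_top)
      refine ENNReal.le_of_forall_pos_le_add (fun ε hε _ => ?_)
      have hbdd : BddAbove F := ⟨a, fun w hw => le_of_lt hw.1.2⟩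
      set M := sSup F with hM
      obtain ⟨w, hwF, hwM⟩ := exists_lt_of_lt_csSup hFne
        (show M - (ε:ℝ) < M by
          have : (0:ℝ) < (ε:ℝ) := hε
          linarith)
      obtain ⟨⟨hw0, hwa⟩, v, hv⟩ := hwF
      have hFM : volume F ≤ ENNReal.ofReal M := by
        have : F ⊆ Ioc 0 M := fun w' hw' => ⟨hw'.1.1, le_csSup hbdd hw'⟩
        calc volume F ≤ volume (Ioc 0 M) := measure_mono this
          _ = ENNReal.ofReal M := by rw [Real.volume_Ioc, sub_zero]
      have hsl := set_lemma hScl hSb ha0 (le_of_lt hw0) hv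
      have hminw : min a w = w := min_eq_right (le_of_lt hwa)
      rw [hminw] at hsl
      calc volume E + volume F ≤ volume E + ENNReal.ofReal M := add_le_add_right hFM _
        _ ≤ volume E + (ENNReal.ofReal w + ENNReal.ofReal (ε:ℝ)) := by
            refine add_le_add_right ?_ _
            calc ENNReal.ofReal M ≤ ENNReal.ofReal (w + (ε:ℝ)) :=
                  ENNReal.ofReal_le_ofReal (by linarith)
              _ ≤ ENNReal.ofReal w + ENNReal.ofReal (ε:ℝ) := ENNReal.ofReal_add_le
        _ = (volume E + ENNReal.ofReal w) + ENNReal.ofReal (ε:ℝ) := by ring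
        _ ≤ volume S + ENNReal.ofReal (ε:ℝ) := add_le_add_left hsl _
        _ = volume S + (ε : ℝ≥0∞) := by rw [ENNReal.ofReal_coe_nnreal]

/-- K2: erosion step inequality. -/
lemma eros_step {h : ℝ → ℕ} (hh : Nice h) {c : ℝ} (hc : 0 ≤ c) (s : ℝ) :
    Phi (fun v => eros c h (v + s)) + ∫⁻ w in Ioo 0 c, lam h w ≤ Phi h := by
  obtain ⟨A, B, hAB⟩ := hh.2
  have hnice_er : Nice (fun v => eros c h v) := by
    have := nice_eros_shift hh (s := 0) hc
    simpa using this
  have h1 : Phi (fun v => eros c h (v + s)) = Phi (fun v => eros c h v) :=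
    Phi_shift (nice_measurable hnice_er) s
  rw [h1, Phi_levels hnice_er, Phi_levels hh, setLintegral_lam_levels h measurableSet_Ioo,
    ← ENNReal.tsum_add]
  refine ENNReal.tsum_le_tsum (fun k => ?_)
  have hlev : {v : ℝ | k + 1 ≤ eros c h v} = {z : ℝ | Icc z (z + c) ⊆ {u : ℝ | k + 1 ≤ h u}} :=
    eros_level hc
  have hsub : lamLevel h k ∩ Ioo 0 c ⊆
      {w : ℝ | w ∈ Ioo 0 c ∧ ∃ v : ℝ, Icc v (v + w) ⊆ {u : ℝ | k + 1 ≤ h u}} := by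
    rintro w ⟨⟨v, hv⟩, hw⟩
    exact ⟨hw, v, fun u hu => le_trans hv (eros_le hu)⟩
  have hSsub : {u : ℝ | k + 1 ≤ h u} ⊆ Icc A B := by
    intro u hu
    simp only [mem_setOf_eq] at hu
    exact hAB (show u ∈ {v : ℝ | 1 ≤ h v} from by simp only [mem_setOf_eq]; omega)
  calc volume {v : ℝ | k + 1 ≤ eros c h v} + volume (lamLevel h k ∩ Ioo 0 c)
      ≤ volume {z : ℝ | Icc z (z + c) ⊆ {u : ℝ | k + 1 ≤ h u}} +
        volume {w : ℝ | w ∈ Ioo 0 c ∧ ∃ v : ℝ, Icc v (v + w) ⊆ {u : ℝ | k + 1 ≤ h u}} := by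
        rw [hlev]
        exact add_le_add_right (measure_mono hsub) _
    _ ≤ volume {u : ℝ | k + 1 ≤ h u} := perLevel (hh.1 (k+1)) hSsub hc

/-- K1: the final (leftmost) inequality. -/
lemma lam_lintegral_le_Phi {h : ℝ → ℕ} (hh : Nice h) :
    ∫⁻ w in Ioi (0:ℝ), lam h w ≤ Phi h := by
  obtain ⟨A, B, hAB⟩ := hh.2
  rw [Phi_levels hh, setLintegral_lam_levels h measurableSet_Ioi]
  refine ENNReal.tsum_le_tsum (fun k => ?_)
  set S := {u : ℝ | k + 1 ≤ h u} with hS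
  have hSfin : volume S < ⊤ := by
    refine lt_of_le_of_lt (measure_mono (show S ⊆ Icc A B from ?_)) ?_
    · intro u hu
      simp only [hS, mem_setOf_eq] at hu
      exact hAB (show u ∈ {v : ℝ | 1 ≤ h v} from by simp only [mem_setOf_eq]; omega)
    · rw [Real.volume_Icc]; exact ENNReal.ofReal_lt_top
  have hsub : lamLevel h k ∩ Ioi 0 ⊆ Ioc 0 (volume S).toReal := by
    rintro w ⟨⟨v, hv⟩, hw0⟩
    refine ⟨hw0, ?_⟩
    have hIcc : Icc v (v + w) ⊆ S := fun u hu => le_trans hv (eros_le hu)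
    have : ENNReal.ofReal w ≤ volume S := by
      calc ENNReal.ofReal w = volume (Icc v (v + w)) := by
            rw [Real.volume_Icc]; congr 1; ring
        _ ≤ volume S := measure_mono hIcc
    have := ENNReal.toReal_mono (ne_of_lt hSfin) this
    rwa [ENNReal.toReal_ofReal (le_of_lt hw0)] at this
  calc volume (lamLevel h k ∩ Ioi 0) ≤ volume (Ioc 0 (volume S).toReal) := measure_mono hsub
    _ = ENNReal.ofReal (volume S).toReal := by rw [Real.volume_Ioc, sub_zero]
    _ ≤ volume S := ENNReal.ofReal_toReal_le


section DP

variable {n : ℕ}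

noncomputable def posF (xs : Fin n → ℝ) (hn : 0 < n) (i : ℕ) : ℝ :=
  xs ⟨min i (n-1), by omega⟩

noncomputable def indF (ms Ms : Fin n → ℝ) (i : ℕ) : ℝ → ℕ := fun v =>
  if h : i < n then (if v ∈ Icc (ms ⟨i, h⟩) (Ms ⟨i, h⟩) then 1 else 0) else 0

noncomputable def hrec (α β : ℝ) (xs ms Ms : Fin n → ℝ) (hn : 0 < n) : ℕ → ℝ → ℕ
  | 0 => fun _ => 0
  | (k+1) => fun v =>
      indF ms Ms (n-k-1) v +
      eros ((β - α) * (posF xs hn (n-k) - posF xs hn (n-k-1)))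
        (hrec α β xs ms Ms hn k) (v + α * (posF xs hn (n-k) - posF xs hn (n-k-1)))

noncomputable def hfun (α β : ℝ) (xs ms Ms : Fin n → ℝ) (hn : 0 < n) (i : ℕ) : ℝ → ℕ :=
  hrec α β xs ms Ms hn (n - i)

variable {α β : ℝ} {xs ms Ms : Fin n → ℝ} (hn : 0 < n)

lemma posF_eq (hmono : Monotone xs) {i : ℕ} (hi : i < n) :
    posF xs hn i = xs ⟨i, hi⟩ := by
  unfold posF
  congr 1
  ext
  simp
  omega

lemma posF_mono (hmono : Monotone xs) : Monotone (posF xs hn) := by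
  intro i j hij
  unfold posF
  exact hmono (by simp only [Fin.mk_le_mk]; omega)

lemma hfun_last : hfun α β xs ms Ms hn n = fun _ => 0 := by
  unfold hfun
  rw [Nat.sub_self]
  rfl

lemma hfun_succ {i : ℕ} (hi : i < n) :
    hfun α β xs ms Ms hn i = fun v =>
      indF ms Ms i v +
      eros ((β - α) * (posF xs hn (i+1) - posF xs hn i))
        (hfun α β xs ms Ms hn (i+1)) (v + α * (posF xs hn (i+1) - posF xs hn i)) := by
  unfold hfun
  have h1 : n - i = (n - i - 1) + 1 := by omega
  rw [h1]
  show (hrec α β xs ms Ms hn ((n-i-1)+1)) = _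
  have h2 : n - (n-i-1) - 1 = i := by omega
  have h3 : n - (n-i-1) = i + 1 := by omega
  have h4 : n - i - 1 = n - (i+1) := by omega
  rw [hrec]
  rw [h2, h3, h4]

lemma nice_hfun (hαβ : α ≤ β) (hmono : Monotone xs) (i : ℕ) :
    Nice (hfun α β xs ms Ms hn i) := by
  -- prove Nice (hrec k) for all k by induction
  suffices h : ∀ k : ℕ, Nice (hrec α β xs ms Ms hn k) by exact h (n - i)
  intro k
  induction k with
  | zero => exact nice_zero
  | succ k ih =>
    show Nice (fun v => indF ms Ms (n-k-1) v + _)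
    refine nice_add ?_ ?_
    · unfold indF
      by_cases h : n - k - 1 < n
      · simp only [dif_pos h]
        exact nice_ind _ _
      · simp only [dif_neg h]
        exact nice_zero
    · refine nice_eros_shift ih ?_
      have : posF xs hn (n-k-1) ≤ posF xs hn (n-k) := posF_mono hn hmono (by omega)
      nlinarith [sub_nonneg.mpr hαβ]

end DP

section Claim

variable {n : ℕ} {α β : ℝ} {xs ms Ms : Fin n → ℝ} (hn : 0 < n)

lemma claim_aux (hαβ : α < β) (hmono : Monotone xs) :
    ∀ k i : ℕ, i ≤ n → n - i = k → ∀ x y : ℝ, x ≤ posF xs hn i →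
    ∃ f : ℝ → ℝ, IsTraj α β x y f ∧
      {j : Fin n | i ≤ (j : ℕ) ∧ f (xs j) ∈ Icc (ms j) (Ms j)}.ncard ≤
        eros ((β - α) * (posF xs hn i - x)) (hfun α β xs ms Ms hn i)
          (y + α * (posF xs hn i - x)) := by
  intro k
  induction k with
  | zero =>
    intro i hi hik x y hx
    have hieq : i = n := by omega
    refine ⟨fun u => y + α * (u - x), isTraj_linear α β x y α le_rfl (le_of_lt hαβ), ?_⟩
    have hempty : {j : Fin n | i ≤ (j : ℕ) ∧ (fun u => y + α * (u - x)) (xs j) ∈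
        Icc (ms j) (Ms j)} = ∅ := by
      ext j
      simp only [mem_setOf_eq, mem_empty_iff_false, iff_false, not_and]
      intro hj
      exfalso
      have := j.isLt
      omega
    rw [hempty, Set.ncard_empty]
    exact Nat.zero_le _
  | succ k ih =>
    intro i hi hik x y hx
    have hilt : i < n := by omega
    set p := posF xs hn i with hp
    set c := (β - α) * (p - x) with hc
    have hc0 : 0 ≤ c := by
      have : 0 ≤ p - x := by linarith
      have hba : 0 ≤ β - α := by linarith
      positivity
    set v0 := y + α * (p - x) with hv0
    obtain ⟨vstar, hvmem, hveq⟩ := eros_exists (hfun α β xs ms Ms hn i) (v := v0) hc0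
    set d := posF xs hn (i+1) - p with hd
    have hd0 : 0 ≤ d := by
      have := posF_mono hn hmono (show i ≤ i + 1 by omega)
      simp only [hd]
      linarith
    -- IH at (p, vstar)
    obtain ⟨f₂, htraj₂, hcount₂⟩ := ih (i+1) (by omega) (by omega) p vstar
      (posF_mono hn hmono (show i ≤ i + 1 by omega))
    have hf₂p : f₂ p = vstar := htraj₂.1
    have hxsi : xs ⟨i, hilt⟩ = p := (posF_eq hn hmono hilt).symm
    -- construct the trajectory
    obtain ⟨f, htraj, hff₂⟩ : ∃ f : ℝ → ℝ, IsTraj α β x y f ∧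
        ∀ j : Fin n, i ≤ (j : ℕ) → f (xs j) = f₂ (xs j) := by
      rcases eq_or_lt_of_le hx with hxp|hxp
      · have hpx0 : p - x = 0 := by rw [← hxp]; ring
        have hvy : vstar = y := by
          have h1 : v0 = y := by rw [hv0, hpx0]; ring
          have h2 : c = 0 := by rw [hc, hpx0]; ring
          have := hvmem
          rw [h1, h2] at this
          have h3 := this.1
          have h4 := this.2
          linarith
        refine ⟨f₂, ?_, fun j hj => rfl⟩
        rw [hxp, ← hvy]
        exact htraj₂
      · set γ := (vstar - y) / (p - x) with hγ
        have hpx : 0 < p - x := by linarith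
        have hγα : α ≤ γ := by
          rw [hγ, le_div_iff₀ hpx]
          have := hvmem.1
          rw [hv0] at this
          linarith
        have hγβ : γ ≤ β := by
          rw [hγ, div_le_iff₀ hpx]
          have := hvmem.2
          rw [hv0, hc] at this
          nlinarith
        have hf₁p : y + γ * (p - x) = vstar := by
          rw [hγ, div_mul_cancel₀]
          · ring
          · exact ne_of_gt hpx
        refine ⟨fun u => if u < p then y + γ * (u - x) else f₂ u, ?_, ?_⟩
        · have := isTraj_glue (le_of_lt hxp) (isTraj_linear α β x y γ hγα hγβ) htraj₂
            (by rw [hf₁p]) hxp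
          exact this
        · intro j hj
          have : p ≤ xs j := by
            rw [← hxsi]
            exact hmono (show (⟨i, hilt⟩ : Fin n) ≤ j by rw [Fin.le_def]; simpa using hj)
          simp only [if_neg (not_lt.mpr this)]
    refine ⟨f, htraj, ?_⟩
    -- count bound
    set B := {j : Fin n | i + 1 ≤ (j : ℕ) ∧ f₂ (xs j) ∈ Icc (ms j) (Ms j)} with hB
    have hA : {j : Fin n | i ≤ (j : ℕ) ∧ f (xs j) ∈ Icc (ms j) (Ms j)} =
        {j : Fin n | i ≤ (j : ℕ) ∧ f₂ (xs j) ∈ Icc (ms j) (Ms j)} := by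
      ext j
      simp only [mem_setOf_eq]
      constructor
      · rintro ⟨h1, h2⟩; exact ⟨h1, by rwa [← hff₂ j h1]⟩
      · rintro ⟨h1, h2⟩; exact ⟨h1, by rwa [hff₂ j h1]⟩
    rw [hA]
    have hrhs : eros ((β - α) * (posF xs hn i - x)) (hfun α β xs ms Ms hn i)
        (y + α * (posF xs hn i - x)) = hfun α β xs ms Ms hn i vstar := hveq.symm
    rw [hrhs, hfun_succ hn hilt]
    beta_reduce
    -- hfun i vstar = indF i vstar + eros c' (hfun (i+1)) (vstar + α * d)
    have hkey : {j : Fin n | i ≤ (j : ℕ) ∧ f₂ (xs j) ∈ Icc (ms j) (Ms j)}.ncard ≤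
        indF ms Ms i vstar + B.ncard := by
      by_cases hyes : vstar ∈ Icc (ms ⟨i, hilt⟩) (Ms ⟨i, hilt⟩)
      · have hsub : {j : Fin n | i ≤ (j : ℕ) ∧ f₂ (xs j) ∈ Icc (ms j) (Ms j)} ⊆
            insert ⟨i, hilt⟩ B := by
          intro j hj
          obtain ⟨h1, h2⟩ := hj
          rcases eq_or_lt_of_le h1 with he|hl
          · left
            apply Fin.ext
            simp only [Fin.val_mk]
            omega
          · right
            exact ⟨by omega, h2⟩
        have hind : indF ms Ms i vstar = 1 := by
          unfold indF
          rw [dif_pos hilt, if_pos hyes]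
        calc {j : Fin n | i ≤ (j : ℕ) ∧ f₂ (xs j) ∈ Icc (ms j) (Ms j)}.ncard
            ≤ (insert (⟨i, hilt⟩ : Fin n) B).ncard := Set.ncard_le_ncard hsub (toFinite _)
          _ ≤ B.ncard + 1 := Set.ncard_insert_le _ _
          _ = indF ms Ms i vstar + B.ncard := by omega
      · have hsub : {j : Fin n | i ≤ (j : ℕ) ∧ f₂ (xs j) ∈ Icc (ms j) (Ms j)} ⊆ B := by
          intro j hj
          obtain ⟨h1, h2⟩ := hj
          rcases eq_or_lt_of_le h1 with he|hl
          · exfalso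
            have hji : j = ⟨i, hilt⟩ := by
              apply Fin.ext
              simp only [Fin.val_mk]
              omega
            rw [hji, hxsi, hf₂p] at h2
            exact hyes h2
          · exact ⟨by omega, h2⟩
        have := Set.ncard_le_ncard hsub (toFinite _)
        omega
    refine le_trans hkey ?_
    have hBle : B.ncard ≤ eros ((β - α) * (posF xs hn (i+1) - posF xs hn i))
        (hfun α β xs ms Ms hn (i+1)) (vstar + α * (posF xs hn (i+1) - posF xs hn i)) := by
      have : (β - α) * (posF xs hn (i+1) - p) = (β - α) * (posF xs hn (i+1) - p) := rfl
      exact hcount₂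
    omega

end Claim

section Ledger

variable {n : ℕ} {α β : ℝ} {xs ms Ms : Fin n → ℝ} (hn : 0 < n)

noncomputable def Wt (ms Ms : Fin n → ℝ) (j : ℕ) : ℝ≥0∞ :=
  if h : j < n then ENNReal.ofReal (Ms ⟨j, h⟩ - ms ⟨j, h⟩) else 0

noncomputable def Lam (α β : ℝ) (xs ms Ms : Fin n → ℝ) (hn : 0 < n) (j : ℕ) : ℝ≥0∞ :=
  ∫⁻ w in Ioo 0 ((β - α) * (posF xs hn (j+1) - posF xs hn j)),
    lam (hfun α β xs ms Ms hn (j+1)) w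

lemma indF_nice (i : ℕ) : Nice (indF ms Ms i) := by
  unfold indF
  by_cases h : i < n
  · simp only [dif_pos h]
    exact nice_ind _ _
  · simp only [dif_neg h]
    exact nice_zero

lemma Phi_indF {i : ℕ} (hi : i < n) : Phi (indF ms Ms i) = Wt ms Ms i := by
  unfold Phi indF Wt
  simp only [dif_pos hi]
  have hpt : ∀ v : ℝ, (((if v ∈ Icc (ms ⟨i,hi⟩) (Ms ⟨i,hi⟩) then 1 else 0 : ℕ)) : ℝ≥0∞) =
      Set.indicator (Icc (ms ⟨i,hi⟩) (Ms ⟨i,hi⟩)) (fun _ => (1:ℝ≥0∞)) v := by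
    intro v
    by_cases hv : v ∈ Icc (ms ⟨i,hi⟩) (Ms ⟨i,hi⟩)
    · simp only [if_pos hv, Set.indicator_of_mem hv, Nat.cast_one]
    · simp only [if_neg hv, Set.indicator_of_notMem hv, Nat.cast_zero]
  rw [lintegral_congr hpt, lintegral_indicator measurableSet_Icc]
  simp [Real.volume_Icc]

lemma ledger (hαβ : α < β) (hmono : Monotone xs) :
    ∀ k i : ℕ, i ≤ n → n - i = k →
    Phi (hfun α β xs ms Ms hn i) + ∑ j ∈ Finset.Ico i n, Lam α β xs ms Ms hn j ≤
      ∑ j ∈ Finset.Ico i n, Wt ms Ms j := by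
  intro k
  induction k with
  | zero =>
    intro i hi hik
    have : i = n := by omega
    subst this
    rw [Finset.Ico_self]
    simp only [Finset.sum_empty, add_zero]
    rw [hfun_last]
    unfold Phi
    simp
  | succ k ih =>
    intro i hi hik
    have hilt : i < n := by omega
    set c' := (β - α) * (posF xs hn (i+1) - posF xs hn i) with hc'
    have hc'0 : 0 ≤ c' := by
      have := posF_mono hn hmono (show i ≤ i + 1 by omega)
      nlinarith [sub_nonneg.mpr (le_of_lt hαβ)]
    set s := α * (posF xs hn (i+1) - posF xs hn i) with hs
    have hsplit : Phi (hfun α β xs ms Ms hn i) =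
        Wt ms Ms i + Phi (fun v => eros c' (hfun α β xs ms Ms hn (i+1)) (v + s)) := by
      rw [hfun_succ hn hilt]
      unfold Phi
      have hpt : ∀ v : ℝ,
          ((indF ms Ms i v + eros c' (hfun α β xs ms Ms hn (i+1)) (v + s) : ℕ) : ℝ≥0∞) =
          ((indF ms Ms i v : ℕ) : ℝ≥0∞) +
            ((eros c' (hfun α β xs ms Ms hn (i+1)) (v + s) : ℕ) : ℝ≥0∞) := by
        intro v
        push_cast
        ring
      rw [lintegral_congr hpt,
        lintegral_add_left (coe_nat_comp_measurable (nice_measurable (indF_nice i))) _]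
      show Phi (indF ms Ms i) + Phi (fun v => eros c' (hfun α β xs ms Ms hn (i+1)) (v + s)) = _
      rw [Phi_indF hilt]
      rfl
    have hstep := eros_step (h := hfun α β xs ms Ms hn (i+1))
      (nice_hfun (ms := ms) (Ms := Ms) hn (le_of_lt hαβ) hmono (i+1)) hc'0 s
    have hico : ∑ j ∈ Finset.Ico i n, Lam α β xs ms Ms hn j =
        Lam α β xs ms Ms hn i + ∑ j ∈ Finset.Ico (i+1) n, Lam α β xs ms Ms hn j :=
      Finset.sum_eq_sum_Ico_succ_bot hilt _
    have hico2 : ∑ j ∈ Finset.Ico i n, Wt ms Ms j =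
        Wt ms Ms i + ∑ j ∈ Finset.Ico (i+1) n, Wt ms Ms j :=
      Finset.sum_eq_sum_Ico_succ_bot hilt _
    rw [hsplit, hico, hico2]
    have hIH := ih (i+1) (by omega) (by omega)
    calc Wt ms Ms i + Phi (fun v => eros c' (hfun α β xs ms Ms hn (i+1)) (v + s)) +
          (Lam α β xs ms Ms hn i + ∑ j ∈ Finset.Ico (i+1) n, Lam α β xs ms Ms hn j)
        = Wt ms Ms i + ((Phi (fun v => eros c' (hfun α β xs ms Ms hn (i+1)) (v + s)) +
            Lam α β xs ms Ms hn i) + ∑ j ∈ Finset.Ico (i+1) n, Lam α β xs ms Ms hn j) := by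
          ring
      _ ≤ Wt ms Ms i + (Phi (hfun α β xs ms Ms hn (i+1)) +
            ∑ j ∈ Finset.Ico (i+1) n, Lam α β xs ms Ms hn j) := by
          refine add_le_add_right (add_le_add_left ?_ _) _
          exact hstep
      _ ≤ Wt ms Ms i + ∑ j ∈ Finset.Ico (i+1) n, Wt ms Ms j := add_le_add_right hIH _

end Ledger

section Subst

lemma map_affine (c : ℝ) (hc : c ≠ 0) (p : ℝ) :
    Measure.map (fun x : ℝ => c * p + (-c) * x) volume = ENNReal.ofReal |c|⁻¹ • volume := by
  have h1 : (fun x : ℝ => c * p + (-c) * x) = (fun u : ℝ => c * p + u) ∘ (fun x => (-c) * x) := rfl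
  rw [h1, ← Measure.map_map (by fun_prop) (by fun_prop),
    Real.map_volume_mul_left (by simpa using hc), Measure.map_smul, map_add_left_eq_self]
  congr 1
  rw [abs_inv, abs_neg]

lemma subst_general {φ : ℝ → ℝ≥0∞} (hφ : Measurable φ) {c : ℝ} (hc : 0 < c) (p : ℝ)
    {s : Set ℝ} (hs : MeasurableSet s) :
    ∫⁻ x in (fun x : ℝ => c * (p - x)) ⁻¹' s, φ (c * (p - x)) =
      ENNReal.ofReal c⁻¹ * ∫⁻ w in s, φ w := by
  have hg : (fun x : ℝ => c * (p - x)) = (fun x : ℝ => c * p + (-c) * x) := by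
    ext x; ring
  rw [hg]
  have hint : ∫⁻ x in (fun x : ℝ => c * p + (-c) * x) ⁻¹' s, φ (c * (p - x)) =
      ∫⁻ x in (fun x : ℝ => c * p + (-c) * x) ⁻¹' s, φ (c * p + (-c) * x) := by
    refine lintegral_congr (fun x => ?_)
    congr 1
    ring
  rw [hint]
  have h2 := setLIntegral_map (μ := volume) hs hφ
    (g := fun x : ℝ => c * p + (-c) * x) (by fun_prop)
  rw [map_affine c (ne_of_gt hc) p] at h2
  rw [← h2, Measure.restrict_smul, lintegral_smul_measure]
  congr 2
  rw [abs_of_pos hc]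

lemma subst_Ioc {φ : ℝ → ℝ≥0∞} (hφ : Measurable φ) {c : ℝ} (hc : 0 < c) {p a : ℝ}
    (ha : a ≤ p) :
    ∫⁻ x in Ioc a p, φ (c * (p - x)) =
      ENNReal.ofReal c⁻¹ * ∫⁻ w in Ico 0 (c * (p - a)), φ w := by
  have hpre : Ioc a p = (fun x : ℝ => c * (p - x)) ⁻¹' Ico 0 (c * (p - a)) := by
    ext x
    simp only [mem_Ioc, mem_preimage, mem_Ico]
    constructor
    · rintro ⟨h1, h2⟩
      constructor
      · nlinarith
      · nlinarith
    · rintro ⟨h1, h2⟩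
      constructor
      · nlinarith
      · nlinarith
  rw [hpre]
  exact subst_general hφ hc p measurableSet_Ico

lemma subst_Iic {φ : ℝ → ℝ≥0∞} (hφ : Measurable φ) {c : ℝ} (hc : 0 < c) (p : ℝ) :
    ∫⁻ x in Iic p, φ (c * (p - x)) = ENNReal.ofReal c⁻¹ * ∫⁻ w in Ici 0, φ w := by
  have hpre : Iic p = (fun x : ℝ => c * (p - x)) ⁻¹' Ici 0 := by
    ext x
    simp only [mem_Iic, mem_preimage, mem_Ici]
    constructor
    · intro h; nlinarith
    · intro h; nlinarith
  rw [hpre]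
  exact subst_general hφ hc p measurableSet_Ici

end Subst

section Majorant

variable {n : ℕ} {α β : ℝ} {xs ms Ms : Fin n → ℝ} (hn : 0 < n)

noncomputable def slab (xs : Fin n → ℝ) (hn : 0 < n) (i : ℕ) : Set ℝ :=
  if i = 0 then Iic (posF xs hn 0) else Ioc (posF xs hn (i-1)) (posF xs hn i)

lemma slab_measurable (i : ℕ) : MeasurableSet (slab xs hn i) := by
  unfold slab
  by_cases h : i = 0
  · rw [if_pos h]; exact measurableSet_Iic
  · rw [if_neg h]; exact measurableSet_Ioc

noncomputable def Gmaj (α β : ℝ) (xs ms Ms : Fin n → ℝ) (hn : 0 < n) : ℝ → ℝ≥0∞ := fun x =>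
  ∑ i ∈ Finset.range n, Set.indicator (slab xs hn i)
    (fun x' => lam (hfun α β xs ms Ms hn i) ((β - α) * (posF xs hn i - x'))) x

lemma T_le_G (hαβ : α < β) (hmono : Monotone xs) (x : ℝ) :
    (⨆ y : ℝ, crossT α β xs ms Ms x y) ≤ Gmaj α β xs ms Ms hn x := by
  classical
  refine iSup_le (fun y => ?_)
  by_cases hex : ∃ i : ℕ, i < n ∧ x ≤ posF xs hn i
  · set i0 := Nat.find hex with hi0def
    have hi0 := Nat.find_spec hex
    obtain ⟨f, htraj, hcnt⟩ := claim_aux hn hαβ hmono (n - i0) i0 (by omega) rfl x y hi0.2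
    have hsets : {j : Fin n | x ≤ xs j ∧ f (xs j) ∈ Icc (ms j) (Ms j)} =
        {j : Fin n | i0 ≤ (j : ℕ) ∧ f (xs j) ∈ Icc (ms j) (Ms j)} := by
      ext j
      simp only [mem_setOf_eq]
      constructor
      · rintro ⟨h1, h2⟩
        refine ⟨Nat.find_le ⟨j.isLt, ?_⟩, h2⟩
        rw [posF_eq hn hmono j.isLt]
        simpa using h1
      · rintro ⟨h1, h2⟩
        refine ⟨?_, h2⟩
        calc x ≤ posF xs hn i0 := hi0.2
          _ = xs ⟨i0, hi0.1⟩ := posF_eq hn hmono hi0.1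
          _ ≤ xs j := hmono (by rw [Fin.le_def]; simpa using h1)
    have h1 : crossT α β xs ms Ms x y ≤
        ({j : Fin n | i0 ≤ (j : ℕ) ∧ f (xs j) ∈ Icc (ms j) (Ms j)}.ncard : ℝ≥0∞) := by
      rw [← hsets]
      exact crossT_le htraj
    have h2 : crossT α β xs ms Ms x y ≤
        ((eros ((β - α) * (posF xs hn i0 - x)) (hfun α β xs ms Ms hn i0)
          (y + α * (posF xs hn i0 - x)) : ℕ) : ℝ≥0∞) :=
      le_trans h1 (Nat.cast_le.mpr hcnt)
    have h3 : ((eros ((β - α) * (posF xs hn i0 - x)) (hfun α β xs ms Ms hn i0)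
          (y + α * (posF xs hn i0 - x)) : ℕ) : ℝ≥0∞) ≤
        lam (hfun α β xs ms Ms hn i0) ((β - α) * (posF xs hn i0 - x)) :=
      le_iSup (fun v => ((eros ((β - α) * (posF xs hn i0 - x)) (hfun α β xs ms Ms hn i0) v : ℕ) :
        ℝ≥0∞)) (y + α * (posF xs hn i0 - x))
    have hxslab : x ∈ slab xs hn i0 := by
      unfold slab
      by_cases h0 : i0 = 0
      · rw [if_pos h0]
        have hx0 : x ≤ posF xs hn 0 := by rw [← h0]; exact hi0.2
        exact hx0
      · rw [if_neg h0]
        refine ⟨?_, hi0.2⟩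
        have hi0m : i0 - 1 < n := by omega
        by_contra hle
        push_neg at hle
        have : i0 ≤ i0 - 1 := Nat.find_le ⟨hi0m, hle⟩
        omega
    calc crossT α β xs ms Ms x y
        ≤ lam (hfun α β xs ms Ms hn i0) ((β - α) * (posF xs hn i0 - x)) := le_trans h2 h3
      _ = Set.indicator (slab xs hn i0)
            (fun x' => lam (hfun α β xs ms Ms hn i0) ((β - α) * (posF xs hn i0 - x'))) x :=
          (Set.indicator_of_mem hxslab
            (fun x' => lam (hfun α β xs ms Ms hn i0) ((β - α) * (posF xs hn i0 - x')))).symm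
      _ ≤ Gmaj α β xs ms Ms hn x := by
          unfold Gmaj
          exact Finset.single_le_sum (f := fun i => Set.indicator (slab xs hn i)
            (fun x' => lam (hfun α β xs ms Ms hn i) ((β - α) * (posF xs hn i - x'))) x)
            (fun i _ => zero_le) (Finset.mem_range.mpr hi0.1)
  · have htraj := isTraj_linear α β x y α le_rfl (le_of_lt hαβ)
    have hempty : {j : Fin n | x ≤ xs j ∧ (fun u => y + α * (u - x)) (xs j) ∈
        Icc (ms j) (Ms j)} = ∅ := by
      ext j
      simp only [mem_setOf_eq, mem_empty_iff_false, iff_false, not_and]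
      intro h1
      exfalso
      refine hex ⟨(j : ℕ), j.isLt, ?_⟩
      rw [posF_eq hn hmono j.isLt]
      simpa using h1
    have hzero : crossT α β xs ms Ms x y ≤ 0 := by
      refine le_trans (crossT_le htraj) ?_
      rw [hempty, Set.ncard_empty]
      simp
    exact le_trans hzero zero_le

end Majorant

section Aux

theorem crossing_aux {n : ℕ} (α β : ℝ) (hαβ : α < β) (xs ms Ms : Fin n → ℝ)
    (hn : 0 < n) (hmono : Monotone xs) (hm : ∀ i, ms i ≤ Ms i) :
    ∫⁻ x : ℝ, (⨆ y : ℝ, crossT α β xs ms Ms x y)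
      ≤ ENNReal.ofReal ((β - α)⁻¹ * ∑ i : Fin n, (Ms i - ms i)) := by
  classical
  obtain ⟨n', rfl⟩ : ∃ n', n = n' + 1 := ⟨n - 1, by omega⟩
  have hba : (0:ℝ) < β - α := by linarith
  set cc := β - α with hcc
  -- the per-slab integrals
  set F : ℕ → ℝ → ℝ≥0∞ := fun i => Set.indicator (slab xs hn i)
    (fun x' => lam (hfun α β xs ms Ms hn i) (cc * (posF xs hn i - x'))) with hF
  have hFmeas : ∀ i, Measurable (F i) := by
    intro i
    refine Measurable.indicator ?_ (slab_measurable hn i)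
    exact (lam_measurable _).comp (by fun_prop)
  have step1 : ∫⁻ x : ℝ, (⨆ y : ℝ, crossT α β xs ms Ms x y) ≤
      ∑ i ∈ Finset.range (n'+1), ∫⁻ x, F i x := by
    calc ∫⁻ x : ℝ, (⨆ y : ℝ, crossT α β xs ms Ms x y)
        ≤ ∫⁻ x, Gmaj α β xs ms Ms hn x := lintegral_mono (fun x => T_le_G hn hαβ hmono x)
      _ = ∑ i ∈ Finset.range (n'+1), ∫⁻ x, F i x := by
          unfold Gmaj
          exact lintegral_finset_sum _ (fun i _ => hFmeas i)
  -- compute each slab integral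
  have hIic : ∫⁻ x, F 0 x = ENNReal.ofReal cc⁻¹ *
      ∫⁻ w in Ici (0:ℝ), lam (hfun α β xs ms Ms hn 0) w := by
    rw [hF]
    simp only []
    rw [lintegral_indicator (slab_measurable hn 0)]
    have hslab0 : slab xs hn 0 = Iic (posF xs hn 0) := by unfold slab; rw [if_pos rfl]
    rw [hslab0]
    exact subst_Iic (lam_measurable _) hba (posF xs hn 0)
  have hIoc : ∀ i : ℕ, ∫⁻ x, F (i+1) x = ENNReal.ofReal cc⁻¹ * Lam α β xs ms Ms hn i := by
    intro i
    rw [hF]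
    simp only []
    rw [lintegral_indicator (slab_measurable hn (i+1))]
    have hslab : slab xs hn (i+1) = Ioc (posF xs hn i) (posF xs hn (i+1)) := by
      unfold slab
      rw [if_neg (by omega)]
      norm_num
    rw [hslab]
    rw [subst_Ioc (lam_measurable _) hba (posF_mono hn hmono (show i ≤ i + 1 by omega))]
    unfold Lam
    congr 1
    rw [Measure.restrict_congr_set (Ioo_ae_eq_Ico (a := (0:ℝ))
      (b := cc * (posF xs hn (i+1) - posF xs hn i))).symm]
  -- K1 on the leftmost slab
  have hK1 : ∫⁻ w in Ici (0:ℝ), lam (hfun α β xs ms Ms hn 0) w ≤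
      Phi (hfun α β xs ms Ms hn 0) := by
    rw [Measure.restrict_congr_set (Ioi_ae_eq_Ici (a := (0:ℝ))).symm]
    exact lam_lintegral_le_Phi (nice_hfun hn (le_of_lt hαβ) hmono 0)
  -- assemble
  have step2 : ∑ i ∈ Finset.range (n'+1), ∫⁻ x, F i x ≤
      ENNReal.ofReal cc⁻¹ * (Phi (hfun α β xs ms Ms hn 0) +
        ∑ j ∈ Finset.Ico 0 (n'+1), Lam α β xs ms Ms hn j) := by
    rw [Finset.sum_range_succ']
    calc (∑ i ∈ Finset.range n', ∫⁻ x, F (i+1) x) + ∫⁻ x, F 0 x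
        = (∑ i ∈ Finset.range n', ENNReal.ofReal cc⁻¹ * Lam α β xs ms Ms hn i) +
          ENNReal.ofReal cc⁻¹ * ∫⁻ w in Ici (0:ℝ), lam (hfun α β xs ms Ms hn 0) w := by
          rw [hIic, Finset.sum_congr rfl (fun i _ => hIoc i)]
      _ ≤ (∑ i ∈ Finset.range n', ENNReal.ofReal cc⁻¹ * Lam α β xs ms Ms hn i) +
          ENNReal.ofReal cc⁻¹ * Phi (hfun α β xs ms Ms hn 0) := by
          exact add_le_add_right (mul_le_mul_right hK1 _) _
      _ = ENNReal.ofReal cc⁻¹ * (Phi (hfun α β xs ms Ms hn 0) +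
            ∑ i ∈ Finset.range n', Lam α β xs ms Ms hn i) := by
          rw [← Finset.mul_sum, mul_add]
          ring
      _ ≤ ENNReal.ofReal cc⁻¹ * (Phi (hfun α β xs ms Ms hn 0) +
            ∑ j ∈ Finset.Ico 0 (n'+1), Lam α β xs ms Ms hn j) := by
          refine mul_le_mul_right (add_le_add_right ?_ _) _
          rw [Finset.range_eq_Ico]
          exact Finset.sum_le_sum_of_subset (Finset.Ico_subset_Ico (le_refl 0) (by omega))
  have hled := ledger (ms := ms) (Ms := Ms) hn hαβ hmono (n'+1) 0 (by omega) (by omega)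
  have step3 : Phi (hfun α β xs ms Ms hn 0) +
      ∑ j ∈ Finset.Ico 0 (n'+1), Lam α β xs ms Ms hn j ≤
      ∑ j ∈ Finset.Ico 0 (n'+1), Wt ms Ms j := hled
  have hWt : ∑ j ∈ Finset.Ico 0 (n'+1), Wt ms Ms j =
      ∑ i : Fin (n'+1), ENNReal.ofReal (Ms i - ms i) := by
    rw [← Finset.range_eq_Ico]
    rw [← Fin.sum_univ_eq_sum_range (fun j => Wt ms Ms j) (n'+1)]
    refine Finset.sum_congr rfl (fun i _ => ?_)
    unfold Wt
    simp only [dif_pos i.isLt, Fin.eta]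
  calc ∫⁻ x : ℝ, (⨆ y : ℝ, crossT α β xs ms Ms x y)
      ≤ ∑ i ∈ Finset.range (n'+1), ∫⁻ x, F i x := step1
    _ ≤ ENNReal.ofReal cc⁻¹ * (Phi (hfun α β xs ms Ms hn 0) +
          ∑ j ∈ Finset.Ico 0 (n'+1), Lam α β xs ms Ms hn j) := step2
    _ ≤ ENNReal.ofReal cc⁻¹ * ∑ j ∈ Finset.Ico 0 (n'+1), Wt ms Ms j :=
        mul_le_mul_right step3 _
    _ = ENNReal.ofReal cc⁻¹ * ∑ i : Fin (n'+1), ENNReal.ofReal (Ms i - ms i) := by rw [hWt]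
    _ = ENNReal.ofReal (cc⁻¹ * ∑ i : Fin (n'+1), (Ms i - ms i)) := by
        rw [ENNReal.ofReal_mul (by positivity)]
        congr 1
        rw [ENNReal.ofReal_sum_of_nonneg (fun i _ => by linarith [hm i])]

end Aux

section Perm

lemma crossT_perm {n : ℕ} (α β : ℝ) (xs ms Ms : Fin n → ℝ) (σ : Equiv.Perm (Fin n))
    (x y : ℝ) :
    crossT α β (xs ∘ ⇑σ) (ms ∘ ⇑σ) (Ms ∘ ⇑σ) x y = crossT α β xs ms Ms x y := by
  unfold crossT
  refine iInf_congr (fun f => iInf_congr (fun hf => ?_))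
  congr 1
  have hset : {i : Fin n | x ≤ (xs ∘ ⇑σ) i ∧ f ((xs ∘ ⇑σ) i) ∈
      Icc ((ms ∘ ⇑σ) i) ((Ms ∘ ⇑σ) i)} =
      ⇑σ.symm '' {i : Fin n | x ≤ xs i ∧ f (xs i) ∈ Icc (ms i) (Ms i)} := by
    ext j
    simp only [mem_setOf_eq, Function.comp_apply, mem_image]
    constructor
    · intro hj
      exact ⟨σ j, hj, by simp⟩
    · rintro ⟨i, hi, rfl⟩
      simpa using hi
  rw [hset, Set.ncard_image_of_injective _ σ.symm.injective]

end Perm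

end CrossingPf


/-- Crossing inequality for finitely many gates:
`∫ T(x) dx ≤ (1/(β-α)) ∑ᵢ (Mᵢ - mᵢ)` where `T x = sup_y t(x,y)`. -/
theorem crossing_inequality (α β : ℝ) (hαβ : α < β) {n : ℕ} (xs ms Ms : Fin n → ℝ)
    (hm : ∀ i, ms i ≤ Ms i) :
    ∫⁻ x : ℝ, (⨆ y : ℝ, crossT α β xs ms Ms x y)
      ≤ ENNReal.ofReal ((β - α)⁻¹ * ∑ i : Fin n, (Ms i - ms i)) := by
  rcases Nat.eq_zero_or_pos n with hn0|hn
  · subst hn0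
    have hzero : ∀ x : ℝ, (⨆ y : ℝ, crossT α β xs ms Ms x y) = 0 := by
      intro x
      refine le_antisymm (iSup_le (fun y => ?_)) zero_le
      have htraj := CrossingPf.isTraj_linear α β x y α le_rfl (le_of_lt hαβ)
      refine le_trans (CrossingPf.crossT_le htraj) ?_
      have : {i : Fin 0 | x ≤ xs i ∧ (fun u => y + α * (u - x)) (xs i) ∈
          Icc (ms i) (Ms i)} = ∅ := by
        ext i
        exact absurd i.isLt (by omega)
      rw [this, Set.ncard_empty]
      simp
    calc ∫⁻ x : ℝ, (⨆ y : ℝ, crossT α β xs ms Ms x y) = ∫⁻ _ : ℝ, 0 :=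
          lintegral_congr hzero
      _ = 0 := lintegral_zero
      _ ≤ _ := zero_le
  · set σ := Tuple.sort xs with hσ
    have hmono : Monotone (xs ∘ ⇑σ) := Tuple.monotone_sort xs
    have hint : ∀ x : ℝ, (⨆ y : ℝ, crossT α β xs ms Ms x y) =
        (⨆ y : ℝ, crossT α β (xs ∘ ⇑σ) (ms ∘ ⇑σ) (Ms ∘ ⇑σ) x y) := by
      intro x
      exact iSup_congr (fun y => (CrossingPf.crossT_perm α β xs ms Ms σ x y).symm)
    have hsum : ∑ i : Fin n, (Ms i - ms i) =
        ∑ i : Fin n, ((Ms ∘ ⇑σ) i - (ms ∘ ⇑σ) i) :=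
      (Equiv.sum_comp σ (fun i => Ms i - ms i)).symm
    rw [lintegral_congr hint, hsum]
    exact CrossingPf.crossing_aux α β hαβ (xs ∘ ⇑σ) (ms ∘ ⇑σ) (Ms ∘ ⇑σ) hn hmono
      (fun i => hm (σ i))
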